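/- Let Σ be a totally ordered set, let n ≥ 2, and let ℓ : □[n] → !Σ be any labelling of the n-cube (the 0-cubes of □[n] being canonically identified with [n] = {0,1}^n, so that □[n] has 2^n ≥ 2 vertices). Then for every p with 1 ≤ p ≤ n−1, the map sending a (p+1)-cube y ∈ (□[n])_{p+1} (i.e., a morphism y : □[p+1] → □[n]) to the labelled p-shell consisting of the restriction of y to ∂□[p+1], the inclusion ∂□[p+1] ↪ □[p+1], and the labelling ℓ∘y : □[p+1] → !Σ, is a bijection from (□[n])_{p+1} onto the set of non-twisted labelled p-shells of the labelled precubical set ℓ : □[n] → !Σ. -/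

import Mathlib

open CategoryTheory CategoryTheory.Limits Opposite

/-!
Statement 6: for any labelling `ℓ : □[n] → !Σ` of the `n`-cube (`n ≥ 2`) and
any `1 ≤ p ≤ n-1`, restriction to the boundary is a bijection from the set
`(□[n])_{p+1}` of `(p+1)`-cubes of `□[n]` onto the set of non-twisted labelled
`p`-shells of `ℓ : □[n] → !Σ`.

The cube category `□` is encoded as `BoxCat` (objects `[n] = {0,1}^n` given by
their dimension, morphisms the composites of coface maps
`δ_i^α = Fin.insertNth i α`), precubical sets as presheaves
`BoxCatᵒᵖ ⥤ Type`, `□[n] = yoneda.obj (bx n)`, and the labelling precubical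
set `!Σ` as the presheaf `bang Λ` of nondecreasing words over the totally
ordered set `Λ` (a morphism of `□` acts by deleting the letters of the
non-retained coordinates; both face maps delete the `i`-th letter).
-/

inductive IsBoxMap : ∀ {m n : ℕ}, ((Fin m → Bool) → (Fin n → Bool)) → Prop
  | id (m : ℕ) : IsBoxMap (id : (Fin m → Bool) → (Fin m → Bool))
  | comp {m n : ℕ} (i : Fin (n + 1)) (α : Bool) {f : (Fin m → Bool) → (Fin n → Bool)} :
      IsBoxMap f → IsBoxMap fun ε => i.insertNth α (f ε)

theorem IsBoxMap.le {m n : ℕ} {f : (Fin m → Bool) → (Fin n → Bool)}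
    (h : IsBoxMap f) : m ≤ n := by
  induction h with
  | id => exact le_rfl
  | comp i α h ih => exact ih.trans (Nat.le_succ _)

theorem IsBoxMap.comp' {m n p : ℕ} {f : (Fin m → Bool) → (Fin n → Bool)}
    {g : (Fin n → Bool) → (Fin p → Bool)} (hf : IsBoxMap f) (hg : IsBoxMap g) :
    IsBoxMap (g ∘ f) := by
  induction hg with
  | id => exact hf
  | comp i α h ih => exact ih.comp i α

structure BoxCat where
  dim : ℕ

abbrev bx (n : ℕ) : BoxCat := ⟨n⟩

instance : Category BoxCat where
  Hom m n := { f : (Fin m.dim → Bool) → (Fin n.dim → Bool) // IsBoxMap f }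
  id m := ⟨id, .id m.dim⟩
  comp f g := ⟨g.1 ∘ f.1, f.2.comp' g.2⟩
  id_comp _ := Subtype.ext rfl
  comp_id _ := Subtype.ext rfl
  assoc _ _ _ := Subtype.ext rfl

theorem BoxCat.hom_le {m n : BoxCat} (f : m ⟶ n) : m.dim ≤ n.dim := f.2.le

/-- A representation of a box map `f : {0,1}^m → {0,1}^n` by the strictly
increasing map `σ : Fin m → Fin n` of "retained coordinates". -/
def IsRepr {m n : ℕ} (f : (Fin m → Bool) → (Fin n → Bool)) (σ : Fin m → Fin n) : Prop :=
  StrictMono σ ∧ (∀ ε k, f ε (σ k) = ε k) ∧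
    (∀ j, (∀ k, σ k ≠ j) → ∀ ε ε', f ε j = f ε' j)

theorem IsBoxMap.exists_repr {m n : ℕ} {f : (Fin m → Bool) → (Fin n → Bool)}
    (h : IsBoxMap f) : ∃ σ : Fin m → Fin n, IsRepr f σ := by
  induction h with
  | id =>
    exact ⟨_root_.id, strictMono_id, fun ε k => rfl, fun j hj ε ε' => absurd rfl (hj j)⟩
  | @comp n' i α g hg ih =>
    obtain ⟨σ, hs, he, hc⟩ := ih
    refine ⟨fun k => i.succAbove (σ k), ((Fin.strictMono_succAbove i).comp hs), ?_, ?_⟩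
    · intro ε k
      simp only [Fin.insertNth_apply_succAbove]
      exact he ε k
    · intro j hj ε ε'
      rcases eq_or_ne j i with rfl | hne
      · simp only [Fin.insertNth_apply_same]
      · obtain ⟨j', rfl⟩ := Fin.exists_succAbove_eq hne
        simp only [Fin.insertNth_apply_succAbove]
        exact hc j' (fun k hk => hj k (congrArg i.succAbove hk)) ε ε'

theorem IsRepr.unique {m n : ℕ} {f : (Fin m → Bool) → (Fin n → Bool)}
    {σ τ : Fin m → Fin n} (hσ : IsRepr f σ) (hτ : IsRepr f τ) : σ = τ := by
  obtain ⟨hσ1, hσ2, hσ3⟩ := hσ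
  obtain ⟨hτ1, hτ2, hτ3⟩ := hτ
  have key : ∀ (σ' τ' : Fin m → Fin n), (∀ ε k, f ε (σ' k) = ε k) →
      (∀ j, (∀ k, τ' k ≠ j) → ∀ ε ε', f ε j = f ε' j) →
      Set.range σ' ⊆ Set.range τ' := by
    intro σ' τ' he hc j hj
    obtain ⟨k, rfl⟩ := hj
    by_contra hr
    simp only [Set.mem_range, not_exists] at hr
    have h2 := hc (σ' k) (fun k' h => hr k' h) (fun _ => true) (fun _ => false)
    rw [he, he] at h2
    simp at h2
  exact (hσ1.range_inj hτ1).1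
    (Set.Subset.antisymm (key σ τ hσ2 hτ3) (key τ σ hτ2 hσ3))

/-- The strictly increasing map of retained coordinates of a morphism of `□`. -/
noncomputable def boxSigma {m n : BoxCat} (f : m ⟶ n) : Fin m.dim → Fin n.dim :=
  f.2.exists_repr.choose

theorem boxSigma_isRepr {m n : BoxCat} (f : m ⟶ n) : IsRepr f.1 (boxSigma f) :=
  f.2.exists_repr.choose_spec

theorem boxSigma_strictMono {m n : BoxCat} (f : m ⟶ n) : StrictMono (boxSigma f) :=
  (boxSigma_isRepr f).1

theorem boxSigma_id (m : BoxCat) : boxSigma (𝟙 m) = _root_.id :=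
  (boxSigma_isRepr (𝟙 m)).unique
    ⟨strictMono_id, fun _ _ => rfl, fun j hj _ _ => absurd rfl (hj j)⟩

theorem boxSigma_comp {m n p : BoxCat} (f : m ⟶ n) (g : n ⟶ p) :
    boxSigma (f ≫ g) = boxSigma g ∘ boxSigma f := by
  obtain ⟨hf1, hf2, hf3⟩ := boxSigma_isRepr f
  obtain ⟨hg1, hg2, hg3⟩ := boxSigma_isRepr g
  refine (boxSigma_isRepr (f ≫ g)).unique ⟨hg1.comp hf1, ?_, ?_⟩
  · intro ε k
    show g.1 (f.1 ε) (boxSigma g (boxSigma f k)) = ε k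
    rw [hg2, hf2]
  · intro j hj ε ε'
    show g.1 (f.1 ε) j = g.1 (f.1 ε') j
    by_cases hrg : ∃ k, boxSigma g k = j
    · obtain ⟨k, rfl⟩ := hrg
      rw [hg2, hg2]
      exact hf3 k (fun k' hk' => hj k' (congrArg (boxSigma g) hk')) ε ε'
    · push_neg at hrg
      exact hg3 j hrg _ _

/-- The labelling precubical set `!Σ` of a totally ordered set of labels `Λ`:
`(!Σ)_n` is the set of nondecreasing `n`-tuples of labels, and a morphism
`f : [m] → [n]` of `□` acts by keeping the letters of the `m` coordinates
retained by `f` (so that both face maps `∂_i^0` and `∂_i^1` delete the `i`-th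
letter). -/
noncomputable def bang (Λ : Type) [LinearOrder Λ] : BoxCatᵒᵖ ⥤ Type where
  obj k := { w : Fin (unop k).dim → Λ // Monotone w }
  map {k k'} g := TypeCat.ofHom fun w => ⟨w.1 ∘ boxSigma g.unop, w.2.comp (boxSigma_strictMono g.unop).monotone⟩
  map_id k := by
    refine ConcreteCategory.hom_ext _ _ fun w => ?_
    refine Subtype.ext ?_
    show w.1 ∘ boxSigma (𝟙 (unop k)) = w.1
    rw [boxSigma_id]
    rfl
  map_comp {k k' k''} g g' := by
    refine ConcreteCategory.hom_ext _ _ fun w => ?_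
    refine Subtype.ext ?_
    show w.1 ∘ boxSigma (g'.unop ≫ g.unop) = (w.1 ∘ boxSigma g.unop) ∘ boxSigma g'.unop
    rw [boxSigma_comp]
    rfl

/-- The boundary `∂□[n]` of the representable precubical set `□[n]`:
`(∂□[n])_k = (□[n])_k = □([k],[n])` for `k < n` and `∅` for `k ≥ n`. -/
def boundaryBox (n : ℕ) : BoxCatᵒᵖ ⥤ Type where
  obj k := { f : unop k ⟶ bx n // (unop k).dim < n }
  map {k k'} g := TypeCat.ofHom fun f => ⟨g.unop ≫ f.1, lt_of_le_of_lt (BoxCat.hom_le g.unop) f.2⟩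
  map_id k := by refine ConcreteCategory.hom_ext _ _ fun f => ?_; exact Subtype.ext (Category.id_comp f.1)
  map_comp {k k' k''} g g' := by
    refine ConcreteCategory.hom_ext _ _ fun f => ?_; exact Subtype.ext (Category.assoc g'.unop g.unop f.1)

/-- The inclusion of precubical sets `∂□[n] ⊆ □[n]`. -/
def boundaryIncl (n : ℕ) : boundaryBox n ⟶ yoneda.obj (bx n) where
  app _ := TypeCat.ofHom fun f => f.1
  naturality _ _ _ := rfl

theorem isBoxMap_const : ∀ {k : ℕ} (v : Fin k → Bool),
    IsBoxMap (fun _ : Fin 0 → Bool => v)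
  | 0, v => by
      have h : (fun _ : Fin 0 → Bool => v) =
          (id : (Fin 0 → Bool) → (Fin 0 → Bool)) :=
        funext fun ε => Subsingleton.elim _ _
      exact h ▸ IsBoxMap.id 0
  | (k + 1), v => by
      have h := (isBoxMap_const (Fin.tail v)).comp (0 : Fin (k + 1)) (v 0)
      have e : (fun _ : Fin 0 → Bool => Fin.insertNth (0 : Fin (k + 1)) (v 0) (Fin.tail v)) =
          (fun _ : Fin 0 → Bool => v) := by
        funext ε
        rw [Fin.insertNth_zero']
        exact Fin.cons_self_tail v
      exact e ▸ h

/-- The vertex `v ∈ {0,1}^k` of `□[k]`, seen as a morphism `[0] → [k]` of `□`. -/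
def vertexBox {k : ℕ} (v : Fin k → Bool) : (bx 0 ⟶ bx k) :=
  ⟨fun _ => v, isBoxMap_const v⟩

/-- The canonical identification of the `0`-cubes of `□[n]` with
`[n] = {0,1}^n`. -/
def vertexEquiv (n : ℕ) : (bx 0 ⟶ bx n) ≃ (Fin n → Bool) where
  toFun g := g.1 Fin.elim0
  invFun v := vertexBox v
  left_inv g := Subtype.ext (funext fun ε => congrArg g.1 (Subsingleton.elim _ _))
  right_inv v := rfl

/-- A labelled `p`-shell of a labelled precubical set `ℓ : K → !Σ`: a
commutative square of precubical sets consisting of a morphism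
`x : ∂□[p+1] → K`, the inclusion `∂□[p+1] ↪ □[p+1]`, a labelling
`□[p+1] → !Σ` and `ℓ`. -/
structure LabelledShell {Λ : Type} [LinearOrder Λ] (K : BoxCatᵒᵖ ⥤ Type)
    (ℓ : K ⟶ bang Λ) (p : ℕ) where
  shell : boundaryBox (p + 1) ⟶ K
  lab : yoneda.obj (bx (p + 1)) ⟶ bang Λ
  comm : shell ≫ ℓ = boundaryIncl (p + 1) ≫ lab

/-- The map induced on `0`-cubes `[p+1] = {0,1}^{p+1} → {0,1}^N = K_0` by a
labelled `p`-shell, where `e` is the identification `K_0 = [N]`. -/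
def shellVertexMap {Λ : Type} [LinearOrder Λ] {K : BoxCatᵒᵖ ⥤ Type}
    {ℓ : K ⟶ bang Λ} {p N : ℕ} (e : K.obj (op (bx 0)) ≃ (Fin N → Bool))
    (s : LabelledShell K ℓ p) : (Fin (p + 1) → Bool) → (Fin N → Bool) :=
  fun v => e (s.shell.app (op (bx 0)) ⟨vertexBox v, Nat.succ_pos p⟩)

/-- A labelled shell is non-twisted if its map on `0`-cubes
`x_0 : [p+1] → [N] = K_0` is a composite `ψ ∘ φ` where `ψ : [q] → [N]` is a
morphism of `□` and `φ(ε_1,…,ε_{p+1}) = (ε_{i_1},…,ε_{i_q})` with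
`1 = i_1 ≤ … ≤ i_q = p+1` and `{1,…,p+1} ⊆ {i_1,…,i_q}` (i.e.
`φ(ε) = ε ∘ ind` with `ind` monotone and surjective). -/
def NonTwisted {Λ : Type} [LinearOrder Λ] {K : BoxCatᵒᵖ ⥤ Type}
    {ℓ : K ⟶ bang Λ} {p N : ℕ} (e : K.obj (op (bx 0)) ≃ (Fin N → Bool))
    (s : LabelledShell K ℓ p) : Prop :=
  ∃ (q : ℕ) (ind : Fin q → Fin (p + 1)) (ψ : (Fin q → Bool) → (Fin N → Bool)),
    Monotone ind ∧ Function.Surjective ind ∧ IsBoxMap ψ ∧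
    ∀ v, shellVertexMap e s v = ψ (v ∘ ind)

/-- The labelled `p`-shell of `ℓ : □[n] → !Σ` obtained by restricting a
`(p+1)`-cube `y : □[p+1] → □[n]` to the boundary `∂□[p+1]`, labelled by
`ℓ ∘ y`. -/
noncomputable def cubeShell {Λ : Type} [LinearOrder Λ] {n p : ℕ}
    (ℓ : yoneda.obj (bx n) ⟶ bang Λ) (y : bx (p + 1) ⟶ bx n) :
    LabelledShell (yoneda.obj (bx n)) ℓ p where
  shell := boundaryIncl (p + 1) ≫ yoneda.map y
  lab := yoneda.map y ≫ ℓ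
  comm := Category.assoc _ _ _


section Aux

open Function

/-- The edge of the cube `[m+1]` in direction `i` based at the zero vertex,
as a box map. -/
theorem edge_isBoxMap (m : ℕ) (i : Fin (m + 1)) :
    IsBoxMap (fun ε : Fin 1 → Bool => fun j => if j = i then ε 0 else false) := by
  induction m with
  | zero =>
    have h : (fun ε : Fin 1 → Bool => fun j : Fin 1 => if j = i then ε 0 else false) =
        (id : (Fin 1 → Bool) → (Fin 1 → Bool)) := by
      funext ε j
      have h1 : j = i := Subsingleton.elim _ _
      have h2 : j = 0 := Subsingleton.elim _ _
      simp [h1, h2.symm]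
    exact h ▸ IsBoxMap.id 1
  | succ m ih =>
    cases i using Fin.cases with
    | zero =>
      have h := (ih 0).comp (Fin.last (m + 1)) false
      have e : (fun ε : Fin 1 → Bool =>
          (Fin.last (m + 1)).insertNth false (fun j : Fin (m + 1) => if j = 0 then ε 0 else false)) =
          (fun ε : Fin 1 → Bool => fun j : Fin (m + 2) => if j = 0 then ε 0 else false) := by
        funext ε j
        cases j using Fin.lastCases with
        | last =>
          rw [Fin.insertNth_apply_same]
          have : (Fin.last (m + 1)) ≠ 0 := by
            simp [Fin.ext_iff]
          simp [this]
        | cast j' =>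
          have : Fin.castSucc j' = (Fin.last (m + 1)).succAbove j' := by
            rw [Fin.succAbove_last]
          rw [this, Fin.insertNth_apply_succAbove, ← this]
          simp [Fin.castSucc_eq_zero_iff]
      exact e ▸ h
    | succ i' =>
      have h := (ih i').comp (0 : Fin (m + 2)) false
      have e : (fun ε : Fin 1 → Bool =>
          (0 : Fin (m + 2)).insertNth false (fun j : Fin (m + 1) => if j = i' then ε 0 else false)) =
          (fun ε : Fin 1 → Bool => fun j : Fin (m + 2) => if j = i'.succ then ε 0 else false) := by
        funext ε j
        cases j using Fin.cases with
        | zero =>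
          rw [Fin.insertNth_apply_same]
          simp [(Fin.succ_ne_zero i').symm]
        | succ j' =>
          have : j'.succ = (0 : Fin (m + 2)).succAbove j' := by
            rw [Fin.succAbove_zero]
          rw [this, Fin.insertNth_apply_succAbove, ← this]
          simp [Fin.succ_inj]
      exact e ▸ h

/-- The vertices of a cell of a labelled shell of `□[n]` are given by the
shell's vertex map. -/
theorem shell_vertex {Λ : Type} [LinearOrder Λ] {n p : ℕ}
    {ℓ : yoneda.obj (bx n) ⟶ bang Λ} (s : LabelledShell (yoneda.obj (bx n)) ℓ p)
    {X : BoxCatᵒᵖ} (g : unop X ⟶ bx (p + 1)) (hk : (unop X).dim < p + 1)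
    (v : Fin (unop X).dim → Bool) :
    (s.shell.app X ⟨g, hk⟩).1 v = shellVertexMap (vertexEquiv n) s (g.1 v) := by
  have h1 := ConcreteCategory.congr_hom (s.shell.naturality ((vertexBox v).op : X ⟶ op (bx 0))) ⟨g, hk⟩
  have h2 : (boundaryBox (p + 1)).map ((vertexBox v).op : X ⟶ op (bx 0)) ⟨g, hk⟩ =
      ⟨vertexBox (g.1 v), Nat.succ_pos p⟩ :=
    Subtype.ext (Subtype.ext rfl)
  have h3 : shellVertexMap (vertexEquiv n) s (g.1 v) =
      vertexEquiv n (s.shell.app (op (bx 0)) ⟨vertexBox (g.1 v), Nat.succ_pos p⟩) := rfl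
  rw [h3, ← h2]
  exact (congrArg (vertexEquiv n) h1).symm

/-- The coface morphism `δ_i^α` of `□`. -/
def dmap {p : ℕ} (i : Fin (p + 1)) (α : Bool) : bx p ⟶ bx (p + 1) :=
  ⟨fun ε => i.insertNth α ε, (IsBoxMap.id p).comp i α⟩

theorem boxSigma_dmap {p : ℕ} (i : Fin (p + 1)) (α : Bool) :
    boxSigma (dmap i α) = i.succAbove := by
  refine (boxSigma_isRepr (dmap i α)).unique
    ⟨Fin.strictMono_succAbove i, ?_, ?_⟩
  · intro ε k
    exact Fin.insertNth_apply_succAbove (α := fun _ : Fin (p + 1) => Bool) i α ε k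
  intro j hj ε ε'
  have hji : j = i := by
    by_contra h
    obtain ⟨k, hk⟩ := Fin.exists_succAbove_eq h
    exact hj k hk
  subst hji
  exact (Fin.insertNth_apply_same (α := fun _ : Fin (p + 1) => Bool) j α ε).trans
    (Fin.insertNth_apply_same (α := fun _ : Fin (p + 1) => Bool) j α ε').symm

/-- A word of length at least `2` is determined by its faces. -/
theorem word_determined {Λ : Type} {m : ℕ} (hm : 1 ≤ m) (w1 w2 : Fin (m + 1) → Λ)
    (h : ∀ i : Fin (m + 1), w1 ∘ i.succAbove = w2 ∘ i.succAbove) : w1 = w2 := by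
  funext j
  have hcard : 1 < Fintype.card (Fin (m + 1)) := by simp; omega
  obtain ⟨i, hi⟩ := Fintype.exists_ne_of_one_lt_card hcard j
  obtain ⟨k, hk⟩ := Fin.exists_succAbove_eq hi.symm
  rw [← hk]
  exact congrFun (h i) k

/-- Extensionality for labelled shells. -/
theorem LabelledShell.ext' {Λ : Type} [LinearOrder Λ] {K : BoxCatᵒᵖ ⥤ Type}
    {ℓ : K ⟶ bang Λ} {p : ℕ} {s1 s2 : LabelledShell K ℓ p}
    (h1 : s1.shell = s2.shell) (h2 : s1.lab = s2.lab) : s1 = s2 := by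
  cases s1; cases s2
  cases h1; cases h2
  rfl

end Aux

/-- For `1 ≤ p ≤ n-1`, sending a `(p+1)`-cube `y ∈ (□[n])_{p+1}` (i.e. a
morphism `y : □[p+1] → □[n]`, by the Yoneda lemma) to its boundary shell,
labelled by `ℓ ∘ y`, is a bijection from `(□[n])_{p+1}` onto the set of
non-twisted labelled `p`-shells of the labelled precubical set
`ℓ : □[n] → !Σ` (the `0`-cubes of `□[n]` being canonically identified with
`[n] = {0,1}^n` via `vertexEquiv`). -/

theorem cubeShell_bijective_onto_nonTwisted {Λ : Type} [LinearOrder Λ]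
    (n : ℕ) (hn : 2 ≤ n) (ℓ : yoneda.obj (bx n) ⟶ bang Λ)
    (p : ℕ) (hp1 : 1 ≤ p) (hp2 : p ≤ n - 1) :
    (∀ y : bx (p + 1) ⟶ bx n, NonTwisted (vertexEquiv n) (cubeShell ℓ y)) ∧
    Function.Injective (fun y : bx (p + 1) ⟶ bx n => cubeShell ℓ y) ∧
    (∀ s : LabelledShell (yoneda.obj (bx n)) ℓ p,
      NonTwisted (vertexEquiv n) s → ∃ y : bx (p + 1) ⟶ bx n, cubeShell ℓ y = s) := by
  -- the shell of `cubeShell ℓ y` is determined by the vertex map of `y`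
  have hshell_eq : ∀ (y : bx (p + 1) ⟶ bx n) (s : LabelledShell (yoneda.obj (bx n)) ℓ p),
      (∀ v, shellVertexMap (vertexEquiv n) s v = y.1 v) →
      (cubeShell ℓ y).shell = s.shell := by
    intro y s hv
    apply NatTrans.ext
    funext X
    refine ConcreteCategory.hom_ext _ _ fun c => ?_
    obtain ⟨g, hg⟩ := c
    refine Subtype.ext (funext fun w => ?_)
    have h1 := shell_vertex s g hg w
    rw [h1, hv]
    rfl
  refine ⟨fun y => ⟨p + 1, _root_.id, y.1, monotone_id, Function.surjective_id, y.2,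
      fun v => rfl⟩, ?_, ?_⟩
  · -- injectivity
    intro y y' h
    refine Subtype.ext (funext fun v => ?_)
    have h1 := ConcreteCategory.congr_hom (congrFun (congrArg NatTrans.app (congrArg LabelledShell.shell h))
      (op (bx 0))) ⟨vertexBox v, Nat.succ_pos p⟩
    exact congrFun (congrArg Subtype.val h1) Fin.elim0
  · -- surjectivity onto non-twisted shells
    intro s hs
    obtain ⟨q, ind, ψ, hmono, hsurj, hψbox, hvert⟩ := hs
    obtain ⟨σψ, hσψmono, hσψeval, hσψconst⟩ := hψbox.exists_repr
    have h1lt : (bx 1).dim < p + 1 := by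
      show 1 < p + 1
      omega
    have hindinj : Function.Injective ind := by
      intro k1 k2 hk
      by_contra hne
      have hg : IsBoxMap (fun ε : Fin 1 → Bool =>
          fun j => if j = ind k1 then ε 0 else false) := edge_isBoxMap p (ind k1)
      obtain ⟨σ, hσmono, hσeval, hσconst⟩ :=
        (s.shell.app (op (bx 1)) ⟨⟨_, hg⟩, h1lt⟩).2.exists_repr
      have hdiff : ∀ m : Fin q, ind m = ind k1 → σ 0 = σψ m := by
        intro m hm
        by_contra hne2
        have hconst := hσconst (σψ m) (fun k => by
          rw [Subsingleton.elim k 0]; exact hne2) (fun _ => true) (fun _ => false)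
        have e1 := congrFun (shell_vertex s ⟨_, hg⟩ h1lt (fun _ => true)) (σψ m)
        have e2 := congrFun (shell_vertex s ⟨_, hg⟩ h1lt (fun _ => false)) (σψ m)
        rw [e1, e2, hvert, hvert, hσψeval, hσψeval] at hconst
        simp only [Function.comp] at hconst
        rw [hm] at hconst
        simp at hconst
      have d1 : σ 0 = σψ k1 := hdiff k1 rfl
      have d2 : σ 0 = σψ k2 := hdiff k2 hk.symm
      exact hne (hσψmono.injective (d1.symm.trans d2))
    have hq : q = p + 1 := le_antisymm
      (by simpa using Fintype.card_le_of_injective ind hindinj)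
      (by simpa using Fintype.card_le_of_surjective ind hsurj)
    subst hq
    have hind_id : ind = _root_.id :=
      ((hmono.strictMono_of_injective hindinj).range_inj strictMono_id).1
        (by rw [Set.range_id, Set.range_eq_univ]; exact hsurj)
    have hfv : ∀ v, shellVertexMap (vertexEquiv n) s v = ψ v := by
      intro v
      rw [hvert, hind_id]
      rfl
    refine ⟨⟨ψ, hψbox⟩, ?_⟩
    have hsh := hshell_eq ⟨ψ, hψbox⟩ s hfv
    refine LabelledShell.ext' hsh ?_
    apply yonedaEquiv.injective
    refine Subtype.ext (word_determined hp1 _ _ fun i => ?_)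
    have key : ∀ (T : yoneda.obj (bx (p + 1)) ⟶ bang Λ),
        (bang Λ).map (dmap i false).op (yonedaEquiv T) = T.app (op (bx p)) (dmap i false) := by
      intro T
      have hT := ConcreteCategory.congr_hom (T.naturality (dmap i false).op) (𝟙 (bx (p + 1)))
      rw [CategoryTheory.yonedaEquiv_apply]
      exact hT.symm
    have t1 := key ((cubeShell ℓ ⟨ψ, hψbox⟩).lab)
    have t2 := key s.lab
    have hplt : (bx p).dim < p + 1 := Nat.lt_succ_self p
    have hdw : (dmap i false ≫ (⟨ψ, hψbox⟩ : bx (p + 1) ⟶ bx n)) =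
        s.shell.app (op (bx p)) ⟨dmap i false, hplt⟩ :=
      ConcreteCategory.congr_hom (congrFun (congrArg NatTrans.app hsh) (op (bx p))) ⟨dmap i false, hplt⟩
    have hc : ℓ.app (op (bx p)) (s.shell.app (op (bx p)) ⟨dmap i false, hplt⟩) =
        s.lab.app (op (bx p)) (dmap i false) :=
      ConcreteCategory.congr_hom (congrFun (congrArg NatTrans.app s.comm) (op (bx p))) ⟨dmap i false, hplt⟩
    calc (yonedaEquiv ((cubeShell ℓ ⟨ψ, hψbox⟩).lab)).1 ∘ i.succAbove
        = ((bang Λ).map (dmap i false).op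
            (yonedaEquiv ((cubeShell ℓ ⟨ψ, hψbox⟩).lab))).1 := by
          rw [← boxSigma_dmap i false]; rfl
      _ = (((cubeShell ℓ ⟨ψ, hψbox⟩).lab).app (op (bx p)) (dmap i false)).1 :=
          congrArg Subtype.val t1
      _ = (ℓ.app (op (bx p)) (dmap i false ≫ (⟨ψ, hψbox⟩ : bx (p + 1) ⟶ bx n))).1 := rfl
      _ = (ℓ.app (op (bx p)) (s.shell.app (op (bx p)) ⟨dmap i false, hplt⟩)).1 := by rw [hdw]
      _ = (s.lab.app (op (bx p)) (dmap i false)).1 := congrArg Subtype.val hc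
      _ = ((bang Λ).map (dmap i false).op (yonedaEquiv s.lab)).1 :=
          (congrArg Subtype.val t2).symm
      _ = (yonedaEquiv s.lab).1 ∘ i.succAbove := by
          rw [← boxSigma_dmap i false]; rfl
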